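/- Let X be a set and let 𝒜, ℬ be collections of subsets of X. If 𝒜 is almost-Γ-like and ℬ is Γ-like, then α₄(𝒜,ℬ) holds if and only if Player I has no winning predetermined strategy in the selection game G_fin(𝒜,ℬ). -/

import Mathlib

open Set

/-- A collection `𝒜` of subsets of `X` is Γ-like if every member is infinite
and every infinite subset of a member is itself a member. -/
def GammaLike {X : Type*} (𝒜 : Set (Set X)) : Prop :=
  ∀ A ∈ 𝒜, A.Infinite ∧ ∀ A' ⊆ A, A'.Infinite → A' ∈ 𝒜

/-- A collection `𝒜` is almost-Γ-like if each `A ∈ 𝒜` has a countably infinite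
subset `A'` all of whose cofinite subsets belong to `𝒜`. -/
def AlmostGammaLike {X : Type*} (𝒜 : Set (Set X)) : Prop :=
  ∀ A ∈ 𝒜, ∃ A' ⊆ A, A'.Countable ∧ A'.Infinite ∧
    ∀ A'' ⊆ A', (A' \ A'').Finite → A'' ∈ 𝒜

/-- `𝒜` is closed under finite unions. -/
def UnionClosed {X : Type*} (𝒜 : Set (Set X)) : Prop :=
  ∀ A ∈ 𝒜, ∀ B ∈ 𝒜, A ∪ B ∈ 𝒜

/-- α₁(𝒜,ℬ): for every sequence from 𝒜 there is `B ∈ ℬ` with `A n \ B` finite for all `n`. -/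
def Alpha1 {X : Type*} (𝒜 ℬ : Set (Set X)) : Prop :=
  ∀ A : ℕ → Set X, (∀ n, A n ∈ 𝒜) → ∃ B ∈ ℬ, ∀ n, (A n \ B).Finite

/-- α₂(𝒜,ℬ): for every sequence from 𝒜 there is `B ∈ ℬ` meeting each `A n` infinitely. -/
def Alpha2 {X : Type*} (𝒜 ℬ : Set (Set X)) : Prop :=
  ∀ A : ℕ → Set X, (∀ n, A n ∈ 𝒜) → ∃ B ∈ ℬ, ∀ n, (A n ∩ B).Infinite

/-- α₂'(𝒜,ℬ): for every sequence from 𝒜 there is `B ∈ ℬ` meeting each `A n`. -/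
def Alpha2' {X : Type*} (𝒜 ℬ : Set (Set X)) : Prop :=
  ∀ A : ℕ → Set X, (∀ n, A n ∈ 𝒜) → ∃ B ∈ ℬ, ∀ n, (A n ∩ B).Nonempty

/-- α₃(𝒜,ℬ): for every sequence from 𝒜 there is `B ∈ ℬ` meeting infinitely many `A n` infinitely. -/
def Alpha3 {X : Type*} (𝒜 ℬ : Set (Set X)) : Prop :=
  ∀ A : ℕ → Set X, (∀ n, A n ∈ 𝒜) → ∃ B ∈ ℬ, {n | (A n ∩ B).Infinite}.Infinite

/-- α₄(𝒜,ℬ): for every sequence from 𝒜 there is `B ∈ ℬ` meeting infinitely many `A n`. -/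
def Alpha4 {X : Type*} (𝒜 ℬ : Set (Set X)) : Prop :=
  ∀ A : ℕ → Set X, (∀ n, A n ∈ 𝒜) → ∃ B ∈ ℬ, {n | (A n ∩ B).Nonempty}.Infinite

/-- α_{1.1}(𝒜,ℬ): α₁ restricted to pairwise disjoint sequences. -/
def Alpha1p1 {X : Type*} (𝒜 ℬ : Set (Set X)) : Prop :=
  ∀ A : ℕ → Set X, (∀ n, A n ∈ 𝒜) → (∀ m n, m ≠ n → Disjoint (A m) (A n)) →
    ∃ B ∈ ℬ, ∀ n, (A n \ B).Finite

/-- α_{1.5}(𝒜,ℬ): for pairwise disjoint sequences from 𝒜 there is `B ∈ ℬ` with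
`A n \ B` finite for infinitely many `n`. -/
def Alpha1p5 {X : Type*} (𝒜 ℬ : Set (Set X)) : Prop :=
  ∀ A : ℕ → Set X, (∀ n, A n ∈ 𝒜) → (∀ m n, m ≠ n → Disjoint (A m) (A n)) →
    ∃ B ∈ ℬ, {n | (A n \ B).Finite}.Infinite

/-- α_{2.1}(𝒜,ℬ): α₂ restricted to pairwise disjoint sequences. -/
def Alpha2p1 {X : Type*} (𝒜 ℬ : Set (Set X)) : Prop :=
  ∀ A : ℕ → Set X, (∀ n, A n ∈ 𝒜) → (∀ m n, m ≠ n → Disjoint (A m) (A n)) →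
    ∃ B ∈ ℬ, ∀ n, (A n ∩ B).Infinite

/-- α_{3.1}(𝒜,ℬ): α₃ restricted to pairwise disjoint sequences. -/
def Alpha3p1 {X : Type*} (𝒜 ℬ : Set (Set X)) : Prop :=
  ∀ A : ℕ → Set X, (∀ n, A n ∈ 𝒜) → (∀ m n, m ≠ n → Disjoint (A m) (A n)) →
    ∃ B ∈ ℬ, {n | (A n ∩ B).Infinite}.Infinite

/-- α_{4.1}(𝒜,ℬ): α₄ restricted to pairwise disjoint sequences. -/
def Alpha4p1 {X : Type*} (𝒜 ℬ : Set (Set X)) : Prop :=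
  ∀ A : ℕ → Set X, (∀ n, A n ∈ 𝒜) → (∀ m n, m ≠ n → Disjoint (A m) (A n)) →
    ∃ B ∈ ℬ, {n | (A n ∩ B).Nonempty}.Infinite

/-- Player I has a winning predetermined strategy in G₁(𝒜,ℬ). -/
def PredWinG1 {X : Type*} (𝒜 ℬ : Set (Set X)) : Prop :=
  ∃ A : ℕ → Set X, (∀ n, A n ∈ 𝒜) ∧
    ∀ a : ℕ → X, (∀ n, a n ∈ A n) → Set.range a ∉ ℬ

/-- Player I has a winning predetermined strategy in G_fin(𝒜,ℬ). -/
def PredWinGfin {X : Type*} (𝒜 ℬ : Set (Set X)) : Prop :=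
  ∃ A : ℕ → Set X, (∀ n, A n ∈ 𝒜) ∧
    ∀ F : ℕ → Set X, (∀ n, (F n).Finite ∧ F n ⊆ A n) → (⋃ n, F n) ∉ ℬ

/-- Player I has a winning predetermined strategy in G_{<2}(𝒜,ℬ),
where II picks at most one point each round. -/
def PredWinGlt2 {X : Type*} (𝒜 ℬ : Set (Set X)) : Prop :=
  ∃ A : ℕ → Set X, (∀ n, A n ∈ 𝒜) ∧
    ∀ F : ℕ → Set X, (∀ n, (F n).Subsingleton ∧ F n ⊆ A n) → (⋃ n, F n) ∉ ℬ

/-- Player I has a winning predetermined strategy in G_cf(𝒜,ℬ),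
where II picks a cofinite subset each round. -/
def PredWinGcf {X : Type*} (𝒜 ℬ : Set (Set X)) : Prop :=
  ∃ A : ℕ → Set X, (∀ n, A n ∈ 𝒜) ∧
    ∀ B : ℕ → Set X, (∀ n, B n ⊆ A n ∧ (A n \ B n).Finite) → (⋃ n, B n) ∉ ℬ

/-- Player I has a winning perfect-information strategy in G₁(𝒜,ℬ):
a function from finite sequences of points of X into 𝒜 defeating all counterplays. -/
def WinG1 {X : Type*} (𝒜 ℬ : Set (Set X)) : Prop :=
  ∃ σ : List X → Set X, (∀ s, σ s ∈ 𝒜) ∧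
    ∀ a : ℕ → X, (∀ n, a n ∈ σ (List.ofFn fun i : Fin n => a i)) → Set.range a ∉ ℬ

/-- Player I has a winning perfect-information strategy in G_fin(𝒜,ℬ):
a function from finite sequences of finite subsets of X into 𝒜 defeating all counterplays. -/
def WinGfin {X : Type*} (𝒜 ℬ : Set (Set X)) : Prop :=
  ∃ σ : List (Set X) → Set X, (∀ s : List (Set X), (∀ F ∈ s, F.Finite) → σ s ∈ 𝒜) ∧
    ∀ F : ℕ → Set X,
      (∀ n, (F n).Finite ∧ F n ⊆ σ (List.ofFn fun i : Fin n => F i)) →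
      (⋃ n, F n) ∉ ℬ

/-- Player I has a winning perfect-information strategy in G_{<2}(𝒜,ℬ):
a function from finite sequences of at-most-singleton subsets of X into 𝒜
defeating all counterplays. -/
def WinGlt2 {X : Type*} (𝒜 ℬ : Set (Set X)) : Prop :=
  ∃ σ : List (Set X) → Set X, (∀ s : List (Set X), (∀ F ∈ s, F.Subsingleton) → σ s ∈ 𝒜) ∧
    ∀ F : ℕ → Set X,
      (∀ n, (F n).Subsingleton ∧ F n ⊆ σ (List.ofFn fun i : Fin n => F i)) →
      (⋃ n, F n) ∉ ℬ

/-- If 𝒜 is almost-Γ-like and ℬ is Γ-like, then α₄(𝒜,ℬ) holds iff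
Player I has no winning predetermined strategy in G_fin(𝒜,ℬ). -/
lemma my_pigeon {α β : Type*} {S : Set α} {W : Set β} (hS : S.Infinite) (hW : W.Finite)
    (w : α → β) (hw : ∀ j ∈ S, w j ∈ W) : ∃ x ∈ W, {j | j ∈ S ∧ w j = x}.Infinite := by
  by_contra h
  push_neg at h
  have hsub : S ⊆ ⋃ x ∈ W, {j | j ∈ S ∧ w j = x} := fun j hj =>
    Set.mem_biUnion (hw j hj) ⟨hj, rfl⟩
  exact hS ((hW.biUnion fun x hx => h x hx).subset hsub)

lemma my_inj_rounds (T : ℕ → Set ℕ) (hT : ∀ i, (T i).Infinite) :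
    ∃ r : ℕ → ℕ, Function.Injective r ∧ ∀ i, r i ∈ T i := by
  have step : ∀ (i : ℕ) (Q : Finset ℕ), ∃ m, m ∈ T i ∧ m ∉ Q := by
    intro i Q
    obtain ⟨m, hm⟩ := ((hT i).diff Q.finite_toSet).nonempty
    exact ⟨m, hm.1, hm.2⟩
  choose p hp1 hp2 using step
  let g : ℕ → Finset ℕ := fun i => Nat.rec ∅ (fun k acc => insert (p k acc) acc) i
  have hg : ∀ k, g (k + 1) = insert (p k (g k)) (g k) := fun k => rfl
  have hmono : ∀ i j, i ≤ j → g i ⊆ g j := by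
    intro i j hij
    induction j, hij using Nat.le_induction with
    | base => exact subset_rfl
    | succ k hk ih => rw [hg k]; exact ih.trans (Finset.subset_insert _ _)
  have hmem : ∀ i j, i < j → p i (g i) ∈ g j := by
    intro i j hij
    exact hmono (i + 1) j hij (by rw [hg i]; exact Finset.mem_insert_self _ _)
  refine ⟨fun i => p i (g i), ?_, fun i => hp1 i (g i)⟩
  have key : ∀ i j, i < j → p i (g i) ≠ p j (g j) := by
    intro i j hij heq
    exact hp2 j (g j) (heq ▸ hmem i j hij)
  intro i j hij
  by_contra hne
  rcases lt_trichotomy i j with h | h | h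
  · exact key i j h hij
  · exact hne h
  · exact key j i h hij.symm

theorem stmt3 {X : Type*} (𝒜 ℬ : Set (Set X))
    (hA : AlmostGammaLike 𝒜) (hB : GammaLike ℬ) :
    Alpha4 𝒜 ℬ ↔ ¬ PredWinGfin 𝒜 ℬ := by
  constructor
  · -- α₄ → no winning predetermined strategy
    intro ha4 hwin
    classical
    obtain ⟨A, hAmem, hAwin⟩ := hwin
    choose A' hsub hcnt hinf hcof using fun n => hA (A n) (hAmem n)
    haveI : Nonempty X := ⟨(hinf 0).nonempty.choose⟩
    set M : Set X := {x | {m | x ∈ A m}.Infinite} with hM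
    -- beating the strategy from an injective transversal
    have beat : ∀ (x : ℕ → X) (r : ℕ → ℕ), Function.Injective x → Function.Injective r →
        (∀ i, x i ∈ A (r i)) → Set.range x ∈ ℬ → False := by
      intro x r hx hr hxr hxB
      have h1 : ∀ n, ((fun m => x '' {i | r i = m}) n).Finite ∧
          (fun m => x '' {i | r i = m}) n ⊆ A n := by
        intro n
        constructor
        · have hss : ({i | r i = n} : Set ℕ).Subsingleton := fun i hi j hj =>
            hr (hi.trans hj.symm)
          exact (hss.image x).finite
        · rintro _ ⟨i, hi, rfl⟩
          exact hi ▸ hxr i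
      apply hAwin (fun m => x '' {i | r i = m}) h1
      have : (⋃ n, x '' {i | r i = n}) = Set.range x := by
        ext y
        simp only [Set.mem_iUnion, Set.mem_image, Set.mem_range, Set.mem_setOf_eq]
        constructor
        · rintro ⟨n, i, _, rfl⟩; exact ⟨i, rfl⟩
        · rintro ⟨i, rfl⟩; exact ⟨r i, i, rfl, rfl⟩
      rw [this]
      exact hxB
    -- the countable set H of high-multiplicity points in the A'ₙ's
    set H : Set X := M ∩ ⋃ n, A' n with hHdef
    have hHc : H.Countable := (Set.countable_iUnion hcnt).mono Set.inter_subset_right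
    obtain ⟨f, hHf⟩ : ∃ f : ℕ → X, H ⊆ Set.range f := by
      rcases H.eq_empty_or_nonempty with hH | hH
      · exact ⟨fun _ => (hinf 0).nonempty.choose, by rw [hH]; exact Set.empty_subset _⟩
      · obtain ⟨f, hf⟩ := Set.Countable.exists_eq_range hHc hH
        exact ⟨f, hf.le⟩
    -- the diagonal sequence fed to α₄
    set C : ℕ → Set X := fun j => A' j \ f '' Set.Iio j with hCdef
    have hC : ∀ j, C j ∈ 𝒜 := by
      intro j
      refine hcof j _ Set.diff_subset (((Set.finite_Iio j).image f).subset ?_)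
      intro x hx
      rcases hx with ⟨h1, h2⟩
      by_contra h3
      exact h2 ⟨h1, h3⟩
    obtain ⟨B, hBmem, hS⟩ := ha4 C hC
    -- Fact 2: B ∩ M is finite
    have hWfin : (B ∩ M).Finite := by
      by_contra hWinf
      have hWinf : (B ∩ M).Infinite := hWinf
      let e := hWinf.natEmbedding
      set x : ℕ → X := fun i => (e i : X) with hx
      have hxinj : Function.Injective x := fun i j h =>
        e.injective (Subtype.ext h)
      have hxB : ∀ i, x i ∈ B := fun i => (e i).2.1
      have hxM : ∀ i, x i ∈ M := fun i => (e i).2.2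
      obtain ⟨r, hrinj, hr⟩ := my_inj_rounds (fun i => {m | x i ∈ A m}) (fun i => hxM i)
      have hrange : Set.range x ∈ ℬ :=
        (hB B hBmem).2 _ (Set.range_subset_iff.mpr hxB)
          (Set.infinite_range_of_injective hxinj)
      exact beat x r hxinj hrinj (fun i => hr i) hrange
    -- Fact 3: only finitely many rounds m with B ∩ A m ⊄ M
    have hRfin : {m | ¬ (B ∩ A m ⊆ M)}.Finite := by
      by_contra hRinf
      have hRinf : {m | ¬ (B ∩ A m ⊆ M)}.Infinite := hRinf
      set R : Set ℕ := {m | ¬ (B ∩ A m ⊆ M)} with hRdef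
      have hwit : ∀ m, m ∈ R → ∃ y, (y ∈ B ∧ y ∈ A m) ∧ y ∉ M := by
        intro m hm
        obtain ⟨y, hy1, hy2⟩ := Set.not_subset.mp hm
        exact ⟨y, ⟨hy1.1, hy1.2⟩, hy2⟩
      choose! w hw1 hw2 using hwit
      have step : ∀ (P : Finset X) (Q : Finset ℕ),
          ∃ m, (m ∈ R ∧ m ∉ Q) ∧ ∃ y, (y ∈ B ∧ y ∈ A m) ∧ y ∉ M ∧ y ∉ P := by
        intro P Q
        by_contra hstep
        push_neg at hstep
        have hwmem : ∀ m ∈ R \ (Q : Set ℕ), w m ∈ (P : Set X) := by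
          intro m hm
          exact hstep m ⟨hm.1, hm.2⟩ (w m) (hw1 m hm.1) (hw2 m hm.1)
        obtain ⟨y, hyP, hJ⟩ := my_pigeon (hRinf.diff Q.finite_toSet) P.finite_toSet w hwmem
        obtain ⟨m0, hm0, hm0w⟩ := hJ.nonempty
        have hyM : y ∈ M := by
          have : {m | y ∈ A m}.Infinite := by
            refine hJ.mono ?_
            rintro m ⟨hmR, rfl⟩
            exact (hw1 m hmR.1).2
          exact this
        exact hw2 m0 hm0.1 (hm0w ▸ hyM)
      choose m hmR y hy1 hy2 hy3 using step
      let g : ℕ → Finset X × Finset ℕ := fun i =>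
        Nat.rec (∅, ∅) (fun _ acc =>
          (insert (y acc.1 acc.2) acc.1, insert (m acc.1 acc.2) acc.2)) i
      have hg : ∀ k, g (k + 1) =
          (insert (y (g k).1 (g k).2) (g k).1, insert (m (g k).1 (g k).2) (g k).2) :=
        fun k => rfl
      set xi : ℕ → X := fun i => y (g i).1 (g i).2 with hxi
      set ri : ℕ → ℕ := fun i => m (g i).1 (g i).2 with hri
      have hmono : ∀ i j, i ≤ j → (g i).1 ⊆ (g j).1 ∧ (g i).2 ⊆ (g j).2 := by
        intro i j hij
        induction j, hij using Nat.le_induction with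
        | base => exact ⟨subset_rfl, subset_rfl⟩
        | succ k hk ih =>
          rw [hg k]
          exact ⟨ih.1.trans (Finset.subset_insert _ _), ih.2.trans (Finset.subset_insert _ _)⟩
      have hxmem : ∀ i j, i < j → xi i ∈ (g j).1 := by
        intro i j hij
        exact (hmono (i + 1) j hij).1 (by rw [hg i]; exact Finset.mem_insert_self _ _)
      have hrmem : ∀ i j, i < j → ri i ∈ (g j).2 := by
        intro i j hij
        exact (hmono (i + 1) j hij).2 (by rw [hg i]; exact Finset.mem_insert_self _ _)
      have hxkey : ∀ i j, i < j → xi i ≠ xi j := by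
        intro i j hij heq
        have h2 : xi j ∈ (g j).1 := heq ▸ hxmem i j hij
        exact hy3 (g j).1 (g j).2 h2
      have hrkey : ∀ i j, i < j → ri i ≠ ri j := by
        intro i j hij heq
        have h2 : ri j ∈ (g j).2 := heq ▸ hrmem i j hij
        exact (hmR (g j).1 (g j).2).2 h2
      have hxinj : Function.Injective xi := by
        intro i j hij
        by_contra hne
        rcases lt_trichotomy i j with h | h | h
        · exact hxkey i j h hij
        · exact hne h
        · exact hxkey j i h hij.symm
      have hrinj : Function.Injective ri := by
        intro i j hij
        by_contra hne
        rcases lt_trichotomy i j with h | h | h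
        · exact hrkey i j h hij
        · exact hne h
        · exact hrkey j i h hij.symm
      have hrange : Set.range xi ∈ ℬ :=
        (hB B hBmem).2 _ (Set.range_subset_iff.mpr fun i => (hy1 (g i).1 (g i).2).1)
          (Set.infinite_range_of_injective hxinj)
      exact beat xi ri hxinj hrinj (fun i => (hy1 (g i).1 (g i).2).2) hrange
    -- Final contradiction
    have hS' : ({j | (C j ∩ B).Nonempty} \ {m | ¬ (B ∩ A m ⊆ M)}).Infinite :=
      hS.diff hRfin
    have hwitC : ∀ j, (C j ∩ B).Nonempty → ∃ x, x ∈ C j ∩ B := fun j h => h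
    choose! w hw using hwitC
    have hwBM : ∀ j ∈ {j | (C j ∩ B).Nonempty} \ {m | ¬ (B ∩ A m ⊆ M)}, w j ∈ B ∩ M := by
      intro j hj
      have hwj := hw j hj.1
      have hjM : B ∩ A j ⊆ M := not_not.mp hj.2
      have hwA : w j ∈ A j := hsub j hwj.1.1
      exact ⟨hwj.2, hjM ⟨hwj.2, hwA⟩⟩
    obtain ⟨x, hxW, hJ⟩ := my_pigeon hS' hWfin w hwBM
    obtain ⟨j0, hj0, hj0w⟩ := hJ.nonempty
    have hxH : x ∈ H := by
      refine ⟨hxW.2, Set.mem_iUnion.mpr ⟨j0, ?_⟩⟩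
      have := (hw j0 hj0.1).1.1
      exact hj0w ▸ this
    obtain ⟨l, hl⟩ := hHf hxH
    obtain ⟨j, hjJ, hjl⟩ := hJ.exists_gt l
    have hwj := hw j hjJ.1.1
    exact hwj.1.2 ⟨l, hjl, hjJ.2 ▸ hl⟩
  · -- no winning strategy → α₄
    intro hnw A hAmem
    have hex : ∃ F : ℕ → Set X, (∀ n, (F n).Finite ∧ F n ⊆ A n) ∧ (⋃ n, F n) ∈ ℬ := by
      by_contra h
      push_neg at h
      exact hnw ⟨A, hAmem, fun F hF => h F hF⟩
    obtain ⟨F, hF, hFB⟩ := hex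
    refine ⟨⋃ n, F n, hFB, ?_⟩
    by_contra hfin
    have hfin : {n | (A n ∩ ⋃ m, F m).Nonempty}.Finite := Set.not_infinite.mp hfin
    have hNsub : {n | (F n).Nonempty} ⊆ {n | (A n ∩ ⋃ m, F m).Nonempty} := by
      intro n hn
      obtain ⟨x, hx⟩ := hn
      exact ⟨x, (hF n).2 hx, Set.mem_iUnion.mpr ⟨n, hx⟩⟩
    have hNfin : {n | (F n).Nonempty}.Finite := hfin.subset hNsub
    have hUfin : (⋃ n, F n).Finite := by
      have : (⋃ n, F n) = ⋃ n ∈ {n | (F n).Nonempty}, F n := by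
        ext x
        simp only [Set.mem_iUnion]
        constructor
        · rintro ⟨n, hn⟩; exact ⟨n, ⟨x, hn⟩, hn⟩
        · rintro ⟨n, _, hn⟩; exact ⟨n, hn⟩
      rw [this]
      exact hNfin.biUnion fun n _ => (hF n).1
    exact (hB _ hFB).1 hUfin
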